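/- The map φ : (Σ, T_Σ) → [0,1] is continuous, where [0,1] carries the Euclidean topology. -/

import Mathlib

open scoped Classical

noncomputable section

/-- `ℕ∞`: the one-point compactification of the positive integers. -/
abbrev NInf : Type := OnePoint ℕ+

/-- View `NInf` as `Option ℕ+`. -/
def toOpt (m : NInf) : Option ℕ+ := m

/-- View `Option ℕ+` as `NInf`. -/
def ofOpt (o : Option ℕ+) : NInf := o

/-- The reciprocal `1/m`, with the convention `1/∞ = 0`. -/
def rinv (m : NInf) : ℝ :=
  match toOpt m with
  | none => 0
  | some a => 1 / (a : ℝ)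

/-- The finite continued fraction `[σ₁, …, σ_k]` computed with the convention `1/∞ = 0`. -/
def cfVal : ℕ → (ℕ → NInf) → ℝ
  | 0, _ => 0
  | k + 1, σ =>
    match toOpt (σ 0) with
    | none => 0
    | some a => 1 / ((a : ℝ) + cfVal k (fun i => σ (i + 1)))

/-- `φ̃(σ) = lim_k [σ₁, …, σ_k]`. -/
def phiTilde (σ : ℕ → NInf) : ℝ := Filter.limUnder Filter.atTop (fun k => cfVal k σ)

/-- The Gauss map `T̄`, with `T̄(0) = 0`. -/
def Tbar (x : ℝ) : ℝ := if x = 0 then 0 else Int.fract (1 / x)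

/-- The first partial quotient `d̄₁(x) = ⌊1/x⌋`, with `d̄₁(0) = ∞`. -/
def dbar (x : ℝ) : NInf := if x = 0 then OnePoint.infty else ((⌊1 / x⌋₊.toPNat' : ℕ+) : NInf)

/-- `f(x) = (d̄₁(x), d̄₂(x), …)`, the sequence of partial quotients (0-indexed:
`cfSeq x k = d̄_{k+1}(x)`). -/
def cfSeq (x : ℝ) : ℕ → NInf := fun k => dbar (Tbar^[k] x)

/-- `Σ_n`: sequences whose first `n` terms are finite and whose remaining terms are `∞`. -/
def SigmaIdx (n : ℕ) : Set (ℕ → NInf) :=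
  {σ | (∀ k < n, σ k ≠ OnePoint.infty) ∧ ∀ k, n ≤ k → σ k = OnePoint.infty}

/-- `Σ_∞ = ℕ^ℕ`: sequences all of whose terms are finite. -/
def SigmaInfSet : Set (ℕ → NInf) := {σ | ∀ k, σ k ≠ OnePoint.infty}

/-- `Σ = Σ_∞ ∪ ⋃ₙ Σ_n` (note `Σ₀ = SigmaIdx 0`). -/
def SigmaSet : Set (ℕ → NInf) := SigmaInfSet ∪ ⋃ n : ℕ, SigmaIdx n

/-- `σ^{(n)}`: keep the first `n` terms, replace the rest by `∞`. -/
def trunc (n : ℕ) (σ : ℕ → NInf) : ℕ → NInf := fun k => if k < n then σ k else OnePoint.infty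

/-- The map `g` forgetting everything after the first `∞`. -/
def gmap (σ : ℕ → NInf) : ℕ → NInf :=
  if h : ∃ k, σ k = OnePoint.infty then trunc (Nat.find h) σ else σ

theorem gmap_mem (σ : ℕ → NInf) : gmap σ ∈ SigmaSet := by
  unfold gmap
  split_ifs with h
  · refine Or.inr (Set.mem_iUnion.mpr ⟨Nat.find h, ?_, ?_⟩)
    · intro k hk
      simpa [trunc, hk] using Nat.find_min h hk
    · intro k hk
      simp [trunc, Nat.not_lt.mpr hk]
  · exact Or.inl fun k hk => h ⟨k, hk⟩

theorem cfSeq_mem (x : ℝ) : cfSeq x ∈ SigmaSet := by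
  by_cases h : ∃ k, Tbar^[k] x = 0
  · refine Or.inr (Set.mem_iUnion.mpr ⟨Nat.find h, ?_, ?_⟩)
    · intro k hk
      have hne : Tbar^[k] x ≠ 0 := Nat.find_min h hk
      simp [cfSeq, dbar, hne]
    · intro k hk
      have h0 : Tbar^[Nat.find h] x = 0 := Nat.find_spec h
      have : Tbar^[k] x = 0 := by
        have := Function.iterate_add_apply Tbar (k - Nat.find h) (Nat.find h) x
        rw [Nat.sub_add_cancel hk] at this
        rw [this, h0]
        exact Function.iterate_fixed (by simp [Tbar]) _
      simp [cfSeq, dbar, this]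
  · refine Or.inl fun k hk => ?_
    have hne : Tbar^[k] x ≠ 0 := fun h0 => h ⟨k, h0⟩
    simp [cfSeq, dbar, hne] at hk

/-- The space `Σ` (as a type). -/
def Sig : Type := {σ : ℕ → NInf // σ ∈ SigmaSet}

def Sig.mk (σ : ℕ → NInf) (h : σ ∈ SigmaSet) : Sig := ⟨σ, h⟩

def Sig.val (s : Sig) : ℕ → NInf := Subtype.val s

/-- `g`, viewed as a map onto `Σ`. -/
def gS (σ : ℕ → NInf) : Sig := Sig.mk (gmap σ) (gmap_mem σ)

/-- `T_Σ`: the topology on `Σ` coinduced by `g` from the product topology. -/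
instance : TopologicalSpace Sig := TopologicalSpace.coinduced gS inferInstance

/-- `f`, viewed as a map into `Σ`. -/
def fS (x : ℝ) : Sig := Sig.mk (cfSeq x) (cfSeq_mem x)

/-- The metric `ρ` on `ℕ∞`. -/
def rho (m n : NInf) : ℝ := if m = n then 0 else rinv m + rinv n

/-- The metric `ρ^ℕ` on `ℕ∞^ℕ`. -/
def rhoN (σ τ : ℕ → NInf) : ℝ := ∑' k : ℕ, rho (σ k) (τ k) / (Nat.fib (k + 1) : ℝ) ^ 2

/-- Predecessor on `NInf` (finite part). -/
def predNInf (m : NInf) : NInf := ofOpt ((toOpt m).map fun a => a - 1)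

/-- The second continued fraction expansion
`(d̄₁(x), …, d̄_{n-1}(x), d̄_n(x) - 1, 1, ∞, ∞, …)` of a rational `x ∈ (0,1)` with
`f(x) ∈ Σ_n`. -/
def tauOf (x : ℝ) (n : ℕ) : ℕ → NInf := fun k =>
  if k + 1 < n then cfSeq x k
  else if k + 1 = n then predNInf (cfSeq x k)
  else if k = n then ((1 : ℕ+) : NInf)
  else OnePoint.infty

end

section Lemmas
open Filter

lemma cfVal_none {σ : ℕ → NInf} {k : ℕ} (h : toOpt (σ 0) = none) : cfVal (k+1) σ = 0 := by
  rw [cfVal, h]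

lemma cfVal_some {σ : ℕ → NInf} {k : ℕ} {a : ℕ+} (h : toOpt (σ 0) = some a) :
    cfVal (k+1) σ = 1 / ((a:ℝ) + cfVal k (fun i => σ (i+1))) := by
  rw [cfVal, h]

lemma pnat_one_le (a : ℕ+) : (1:ℝ) ≤ (a:ℕ) := by exact_mod_cast a.one_le

lemma cfVal_nonneg : ∀ (k : ℕ) (σ : ℕ → NInf), 0 ≤ cfVal k σ := by
  intro k
  induction k with
  | zero => intro σ; simp [cfVal]
  | succ k ih =>
    intro σ
    rcases h : toOpt (σ 0) with _ | a
    · rw [cfVal_none h]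
    · rw [cfVal_some h]
      have h1 := pnat_one_le a
      have h2 := ih (fun i => σ (i+1))
      positivity

lemma cfVal_le_one : ∀ (k : ℕ) (σ : ℕ → NInf), cfVal k σ ≤ 1 := by
  intro k
  induction k with
  | zero => intro σ; simp [cfVal]
  | succ k _ =>
    intro σ
    rcases h : toOpt (σ 0) with _ | a
    · rw [cfVal_none h]; norm_num
    · rw [cfVal_some h]
      have h1 := pnat_one_le a
      have h2 := cfVal_nonneg k (fun i => σ (i+1))
      rw [div_le_one (by linarith)]
      linarith

lemma rinv_nonneg (m : NInf) : 0 ≤ rinv m := by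
  rcases h : toOpt m with _ | a
  · simp [rinv, h]
  · simp only [rinv, h]
    positivity

lemma rinv_infty : rinv (OnePoint.infty) = 0 := rfl

lemma cfVal_le_rinv (k : ℕ) (σ : ℕ → NInf) : cfVal (k+1) σ ≤ rinv (σ 0) := by
  rcases h : toOpt (σ 0) with _ | a
  · rw [cfVal_none h]; simp [rinv, h]
  · rw [cfVal_some h]
    simp only [rinv, h]
    have h1 := pnat_one_le a
    have h2 := cfVal_nonneg k (fun i => σ (i+1))
    exact one_div_le_one_div_of_le (by linarith) (by linarith)

/-- one-step Lipschitz bound -/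
lemma step1 (A s t : ℝ) (hA : 1 ≤ A) (hs : 0 ≤ s) (ht : 0 ≤ t) :
    |1/(A+s) - 1/(A+t)| ≤ |s - t| := by
  have h1 : (0:ℝ) < A + s := by linarith
  have h2 : (0:ℝ) < A + t := by linarith
  have key : 1/(A+s) - 1/(A+t) = (t - s)/((A+s)*(A+t)) := by
    field_simp
    ring
  have hprod : (0:ℝ) < (A+s)*(A+t) := by positivity
  have hd : 1 ≤ (A+s)*(A+t) := by nlinarith
  rw [key, abs_div, abs_of_pos hprod, abs_sub_comm]
  exact div_le_self (abs_nonneg _) hd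

/-- two-step contraction -/
lemma step2 (A B s t : ℝ) (hA : 1 ≤ A) (hB : 1 ≤ B) (hs : 0 ≤ s) (ht : 0 ≤ t) :
    |1/(A + 1/(B+s)) - 1/(A + 1/(B+t))| ≤ |s - t| / 4 := by
  have hBs : (0:ℝ) < B + s := by linarith
  have hBt : (0:ℝ) < B + t := by linarith
  have hAs : (0:ℝ) < A + 1/(B+s) := by positivity
  have hAt : (0:ℝ) < A + 1/(B+t) := by positivity
  have key : 1/(A + 1/(B+s)) - 1/(A + 1/(B+t))
      = (s - t)/((A*(B+s)+1)*(A*(B+t)+1)) := by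
    field_simp
    ring
  have e1 : (1:ℝ)*1 ≤ A*(B+s) := mul_le_mul hA (by linarith) (by norm_num) (by linarith)
  have e2 : (1:ℝ)*1 ≤ A*(B+t) := mul_le_mul hA (by linarith) (by norm_num) (by linarith)
  have e3 : (2:ℝ)*2 ≤ (A*(B+s)+1)*(A*(B+t)+1) :=
    mul_le_mul (by linarith) (by linarith) (by linarith) (by linarith)
  have hprod : (0:ℝ) < (A*(B+s)+1)*(A*(B+t)+1) := by linarith
  have hd : (4:ℝ) ≤ (A*(B+s)+1)*(A*(B+t)+1) := by linarith
  rw [key, abs_div, abs_of_pos hprod]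
  exact div_le_div_of_nonneg_left (abs_nonneg _) (by norm_num) hd

end Lemmas
section Lemmas2
open Filter
open scoped Topology

lemma lemL : ∀ (p : ℕ) (σ τ : ℕ → NInf), (∀ i < p, σ i = τ i) → ∀ m n : ℕ,
    |cfVal (p + m) σ - cfVal (p + n) τ|
      ≤ |cfVal m (fun i => σ (i + p)) - cfVal n (fun i => τ (i + p))| := by
  intro p
  induction p with
  | zero => intro σ τ _ m n; simp
  | succ p ih =>
    intro σ τ hag m n
    have h0 : σ 0 = τ 0 := hag 0 (Nat.succ_pos p)
    have hm : p + 1 + m = (p + m) + 1 := by omega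
    have hn : p + 1 + n = (p + n) + 1 := by omega
    rw [hm, hn]
    rcases hh : toOpt (σ 0) with _ | a
    · have hτ : toOpt (τ 0) = none := by rw [← h0]; exact hh
      rw [cfVal_none hh, cfVal_none hτ]
      simpa using abs_nonneg _
    · have hτ : toOpt (τ 0) = some a := by rw [← h0]; exact hh
      rw [cfVal_some hh, cfVal_some hτ]
      have hA := pnat_one_le a
      have hs := cfVal_nonneg (p + m) (fun i => σ (i+1))
      have ht := cfVal_nonneg (p + n) (fun i => τ (i+1))
      refine (step1 _ _ _ hA hs ht).trans ?_
      have hag' : ∀ i < p, (fun i => σ (i+1)) i = (fun i => τ (i+1)) i := by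
        intro i hi; exact hag (i+1) (by omega)
      have := ih (fun i => σ (i+1)) (fun i => τ (i+1)) hag' m n
      have e1 : (fun i => σ (i + 1 + p)) = (fun i => σ (i + (p+1))) := by
        funext i; congr 1; omega
      have e2 : (fun i => τ (i + 1 + p)) = (fun i => τ (i + (p+1))) := by
        funext i; congr 1; omega
      simpa [e1, e2, ← Nat.add_assoc] using this

lemma key2 : ∀ (j : ℕ) (σ τ : ℕ → NInf) (m n : ℕ), (∀ i < 2*j, σ i = τ i) →
    2*j ≤ m → 2*j ≤ n → |cfVal m σ - cfVal n τ| ≤ (1/4 : ℝ)^j := by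
  intro j
  induction j with
  | zero =>
    intro σ τ m n _ _ _
    have h1 := cfVal_nonneg m σ
    have h2 := cfVal_nonneg n τ
    have h3 := cfVal_le_one m σ
    have h4 := cfVal_le_one n τ
    rw [pow_zero, abs_le]
    constructor <;> linarith
  | succ j ih =>
    intro σ τ m n hag hm hn
    obtain ⟨m', rfl⟩ : ∃ m', m = m' + 2 := ⟨m - 2, by omega⟩
    obtain ⟨n', rfl⟩ : ∃ n', n = n' + 2 := ⟨n - 2, by omega⟩
    have h0 : σ 0 = τ 0 := hag 0 (by omega)
    rcases hh : toOpt (σ 0) with _ | a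
    · have hτ : toOpt (τ 0) = none := by rw [← h0]; exact hh
      rw [cfVal_none hh, cfVal_none hτ]
      simp only [sub_zero, abs_zero]
      positivity
    · have hτ : toOpt (τ 0) = some a := by rw [← h0]; exact hh
      rw [cfVal_some hh, cfVal_some hτ]
      have h1 : (fun i => σ (i+1)) 0 = (fun i => τ (i+1)) 0 := hag 1 (by omega)
      rcases hh1 : toOpt ((fun i => σ (i+1)) 0) with _ | b
      · have hτ1 : toOpt ((fun i => τ (i+1)) 0) = none := by rw [← h1]; exact hh1
        rw [cfVal_none hh1, cfVal_none hτ1]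
        simp only [sub_self, abs_zero]
        positivity
      · have hτ1 : toOpt ((fun i => τ (i+1)) 0) = some b := by rw [← h1]; exact hh1
        rw [cfVal_some hh1, cfVal_some hτ1]
        have hA := pnat_one_le a
        have hB := pnat_one_le b
        have hs := cfVal_nonneg m' (fun i => σ (i+1+1))
        have ht := cfVal_nonneg n' (fun i => τ (i+1+1))
        refine (step2 (a:ℝ) (b:ℝ) (cfVal m' (fun i => σ (i+1+1)))
          (cfVal n' (fun i => τ (i+1+1))) hA hB hs ht).trans ?_
        have hbd : |cfVal m' (fun i => σ (i+1+1)) - cfVal n' (fun i => τ (i+1+1))|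
            ≤ (1/4:ℝ)^j :=
          ih (fun i => σ (i+1+1)) (fun i => τ (i+1+1)) m' n'
            (fun i hi => hag (i+1+1) (by omega)) (by omega) (by omega)
        calc |cfVal m' (fun i => σ (i+1+1)) - cfVal n' (fun i => τ (i+1+1))| / 4
            ≤ (1/4:ℝ)^j / 4 := by linarith
          _ = (1/4:ℝ)^(j+1) := by ring

lemma cfVal_tendsto (σ : ℕ → NInf) :
    Tendsto (fun k => cfVal k σ) atTop (𝓝 (phiTilde σ)) := by
  have hgeo : ∀ n : ℕ, dist (cfVal n σ) (cfVal (n+1) σ) ≤ 2 * (1/2:ℝ)^n := by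
    intro n
    rw [Real.dist_eq]
    have h1 : |cfVal n σ - cfVal (n+1) σ| ≤ (1/4:ℝ)^(n/2) :=
      key2 (n/2) σ σ n (n+1) (fun i _ => rfl) (by omega) (by omega)
    have h2 : ((1:ℝ)/4)^(n/2) = (1/2:ℝ)^(2*(n/2)) := by
      rw [show (1/4:ℝ) = (1/2)^2 by norm_num, ← pow_mul]
    have h3 : ((1:ℝ)/2)^(2*(n/2)) ≤ (1/2:ℝ)^(n-1) :=
      pow_le_pow_of_le_one (by norm_num) (by norm_num) (by omega)
    have h4 : ((1:ℝ)/2)^(n-1) ≤ 2 * (1/2:ℝ)^n := by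
      rcases n with _ | j
      · norm_num
      · simp only [Nat.add_sub_cancel, pow_succ]
        ring_nf
        linarith [pow_nonneg (by norm_num : (0:ℝ) ≤ 1/2) j]
    calc |cfVal n σ - cfVal (n+1) σ| ≤ (1/4:ℝ)^(n/2) := h1
      _ = (1/2:ℝ)^(2*(n/2)) := h2
      _ ≤ (1/2:ℝ)^(n-1) := h3
      _ ≤ 2 * (1/2:ℝ)^n := h4
  have hc : CauchySeq (fun k => cfVal k σ) :=
    cauchySeq_of_le_geometric (1/2) 2 (by norm_num) hgeo
  obtain ⟨l, hl⟩ := cauchySeq_tendsto_of_complete hc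
  have : phiTilde σ = l := hl.limUnder_eq
  rw [this]
  exact hl

lemma phi_diff_le {σ τ : ℕ → NInf} {c : ℝ}
    (h : ∀ᶠ m in atTop, |cfVal m σ - cfVal m τ| ≤ c) :
    |phiTilde σ - phiTilde τ| ≤ c := by
  have ht : Tendsto (fun m => |cfVal m σ - cfVal m τ|) atTop
      (𝓝 |phiTilde σ - phiTilde τ|) := ((cfVal_tendsto σ).sub (cfVal_tendsto τ)).abs
  exact le_of_tendsto ht h

lemma cfVal_trunc : ∀ (m n : ℕ) (σ : ℕ → NInf), σ n = OnePoint.infty →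
    cfVal m (trunc n σ) = cfVal m σ := by
  intro m
  induction m with
  | zero => intro n σ _; rfl
  | succ m ih =>
    intro n σ h
    rcases n with _ | n
    · have h0 : toOpt (σ 0) = none := by rw [h]; rfl
      have h0' : toOpt (trunc 0 σ 0) = none := by simp [trunc]; rfl
      rw [cfVal_none h0, cfVal_none h0']
    · have ht0 : trunc (n+1) σ 0 = σ 0 := by simp [trunc]
      rcases hh : toOpt (σ 0) with _ | a
      · have h0' : toOpt (trunc (n+1) σ 0) = none := by rw [ht0]; exact hh
        rw [cfVal_none hh, cfVal_none h0']
      · have h0' : toOpt (trunc (n+1) σ 0) = some a := by rw [ht0]; exact hh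
        rw [cfVal_some hh, cfVal_some h0']
        have e : (fun i => trunc (n+1) σ (i+1)) = trunc n (fun i => σ (i+1)) := by
          funext i
          simp only [trunc, Nat.add_lt_add_iff_right]
        rw [e, ih n (fun i => σ (i+1)) h]

lemma phiTilde_gmap (σ : ℕ → NInf) : phiTilde (gmap σ) = phiTilde σ := by
  unfold gmap
  split_ifs with h
  · have e : (fun k => cfVal k (trunc (Nat.find h) σ)) = fun k => cfVal k σ :=
      funext fun k => cfVal_trunc k (Nat.find h) σ (Nat.find_spec h)
    unfold phiTilde
    rw [e]
  · rfl

end Lemmas2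
section Lemmas3
open Filter
open scoped Topology

lemma isOpen_singleton_coe (a : ℕ+) : IsOpen ({(a : NInf)} : Set NInf) := by
  have e : ({(a : NInf)} : Set NInf) = (fun x : ℕ+ => (x : NInf)) '' {a} := by simp
  rw [e]
  exact OnePoint.isOpenEmbedding_coe.isOpenMap _ (isOpen_discrete _)

lemma ninf_cases (m : NInf) : m = OnePoint.infty ∨ ∃ a : ℕ+, m = (a : NInf) := by
  rcases h : toOpt m with _ | a
  · exact Or.inl h
  · exact Or.inr ⟨a, h⟩

lemma rinv_small_nhds {δ : ℝ} (hδ : 0 < δ) :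
    {m : NInf | rinv m < δ} ∈ 𝓝 (OnePoint.infty : NInf) := by
  have hmem : (OnePoint.infty : NInf) ∈ {m : NInf | rinv m < δ} := by
    simpa [rinv_infty] using hδ
  refine IsOpen.mem_nhds ?_ hmem
  rw [OnePoint.isOpen_iff_of_mem hmem]
  refine ⟨isClosed_discrete _, Set.Finite.isCompact ?_⟩
  have hsub : ((fun a : ℕ+ => (a : NInf)) ⁻¹' {m : NInf | rinv m < δ})ᶜ
      ⊆ Set.Iic (⟨⌈1/δ⌉₊ + 1, by omega⟩ : ℕ+) := by
    intro a ha
    simp only [Set.mem_compl_iff, Set.mem_preimage, Set.mem_setOf_eq, not_lt] at ha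
    have hra : rinv (a : NInf) = 1 / ((a:ℕ) : ℝ) := rfl
    rw [hra] at ha
    have hapos : (0:ℝ) < ((a:ℕ) : ℝ) := by exact_mod_cast a.pos
    have h1 : ((a:ℕ) : ℝ) ≤ 1/δ := by
      rw [le_div_iff₀ hδ]
      have := mul_le_mul_of_nonneg_right ha (le_of_lt hapos)
      calc ((a:ℕ):ℝ) * δ = δ * ((a:ℕ):ℝ) := by ring
        _ ≤ (1/((a:ℕ):ℝ)) * ((a:ℕ):ℝ) := this
        _ = 1 := by field_simp
    have h2 : ((a:ℕ):ℝ) ≤ (⌈1/δ⌉₊ : ℝ) := h1.trans (Nat.le_ceil _)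
    have h3 : (a:ℕ) ≤ ⌈1/δ⌉₊ := by exact_mod_cast h2
    show a ≤ _
    show (a:ℕ) ≤ ⌈1/δ⌉₊ + 1
    show (a:ℕ) ≤ ⌈1/δ⌉₊ + 1
    omega
  exact (Set.finite_Iic _).subset hsub

lemma phiTilde_continuous : Continuous (phiTilde : (ℕ → NInf) → ℝ) := by
  rw [continuous_iff_continuousAt]
  intro σ
  rw [ContinuousAt, Metric.tendsto_nhds]
  intro ε hε
  obtain ⟨j, hj⟩ : ∃ j : ℕ, (1/4:ℝ)^j < ε := exists_pow_lt_of_lt_one hε (by norm_num)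
  by_cases hfin : ∃ i, i < 2*j ∧ σ i = OnePoint.infty
  · -- case B: there is an ∞ among the first 2j terms
    set p := Nat.find hfin with hp
    obtain ⟨hpk, hpinf⟩ := Nat.find_spec hfin
    have hbefore : ∀ i < p, σ i ≠ OnePoint.infty := by
      intro i hi hcon
      exact Nat.find_min hfin hi ⟨by omega, hcon⟩
    have e1 : ∀ᶠ τ in 𝓝 σ, ∀ i ∈ Finset.range p, τ i = σ i := by
      rw [eventually_all_finset]
      intro i hi
      rw [Finset.mem_range] at hi
      rcases ninf_cases (σ i) with hcase | ⟨a, ha⟩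
      · exact absurd hcase (hbefore i hi)
      · have : {τ : ℕ → NInf | τ i = σ i} ∈ 𝓝 σ := by
          have hopen : IsOpen {τ : ℕ → NInf | τ i = σ i} := by
            have : {τ : ℕ → NInf | τ i = σ i} = (fun τ : ℕ → NInf => τ i) ⁻¹' {σ i} := rfl
            rw [this, ha]
            exact (isOpen_singleton_coe a).preimage (continuous_apply i)
          exact hopen.mem_nhds rfl
        exact this
    have e2 : ∀ᶠ τ in 𝓝 σ, rinv (τ p) < ε/2 := by
      have : (fun τ : ℕ → NInf => τ p) ⁻¹' {m : NInf | rinv m < ε/2} ∈ 𝓝 σ := by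
        apply (continuous_apply p).continuousAt.preimage_mem_nhds
        rw [hpinf]
        exact rinv_small_nhds (by linarith)
      exact this
    filter_upwards [e1, e2] with τ h1 h2
    rw [Real.dist_eq]
    have hbound : |phiTilde τ - phiTilde σ| ≤ ε/2 := by
      apply phi_diff_le
      rw [eventually_atTop]
      refine ⟨p + 1, fun m hm => ?_⟩
      obtain ⟨j', rfl⟩ : ∃ j', m = p + (j' + 1) := ⟨m - p - 1, by omega⟩
      have hagree : ∀ i < p, τ i = σ i := fun i hi => h1 i (Finset.mem_range.mpr hi)
      refine (lemL p τ σ hagree (j'+1) (j'+1)).trans ?_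
      have hσ0 : toOpt ((fun i => σ (i + p)) 0) = none := by
        show toOpt (σ (0 + p)) = none
        rw [Nat.zero_add, hpinf]
        rfl
      rw [cfVal_none (σ := fun i => σ (i + p)) hσ0, sub_zero]
      have hnn := cfVal_nonneg (j'+1) (fun i => τ (i + p))
      rw [abs_of_nonneg hnn]
      have hle := cfVal_le_rinv j' (fun i => τ (i + p))
      simp only [Nat.zero_add] at hle
      linarith
    linarith
  · -- case A: all of the first 2j terms are finite
    push_neg at hfin
    have e1 : ∀ᶠ τ in 𝓝 σ, ∀ i ∈ Finset.range (2*j), τ i = σ i := by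
      rw [eventually_all_finset]
      intro i hi
      rw [Finset.mem_range] at hi
      rcases ninf_cases (σ i) with hcase | ⟨a, ha⟩
      · exact absurd hcase (hfin i hi)
      · have hopen : IsOpen {τ : ℕ → NInf | τ i = σ i} := by
          have : {τ : ℕ → NInf | τ i = σ i} = (fun τ : ℕ → NInf => τ i) ⁻¹' {σ i} := rfl
          rw [this, ha]
          exact (isOpen_singleton_coe a).preimage (continuous_apply i)
        exact hopen.mem_nhds rfl
    filter_upwards [e1] with τ h1
    rw [Real.dist_eq]
    have hbound : |phiTilde τ - phiTilde σ| ≤ (1/4:ℝ)^j := by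
      apply phi_diff_le
      rw [eventually_atTop]
      refine ⟨2*j, fun m hm => ?_⟩
      exact key2 j τ σ m m (fun i hi => h1 i (Finset.mem_range.mpr hi)) hm hm
    exact lt_of_le_of_lt hbound hj

end Lemmas3

/-- `φ : (Σ, T_Σ) → [0,1]` is continuous. -/
theorem stmt15 : Continuous fun s : Sig => phiTilde (Sig.val s) := by
  have h : Continuous fun σ : ℕ → NInf => phiTilde (Sig.val (gS σ)) := by
    have e : (fun σ : ℕ → NInf => phiTilde (Sig.val (gS σ))) = phiTilde :=
      funext fun σ => phiTilde_gmap σ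
    rw [e]
    exact phiTilde_continuous
  exact continuous_coinduced_dom.mpr h
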